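/- Let P, Q, L be real n×n matrices with P = Pᵀ, Q = Qᵀ and L invertible. Then the free symplectic matrix S_W factors as S_W = [[Iₙ, 0],[P, Iₙ]] · [[L⁻¹, 0],[0, Lᵀ]] · J · [[Iₙ, 0],[Q, Iₙ]], where J = [[0, Iₙ],[−Iₙ, 0]]. -/
import Mathlib


open Matrix

/-- The standard symplectic matrix `J = [[0, I],[-I, 0]]`. -/
noncomputable def sympJ (n : ℕ) : Matrix (Fin n ⊕ Fin n) (Fin n ⊕ Fin n) ℝ :=
  Matrix.fromBlocks 0 1 (-1) 0

/-- The free symplectic matrix `S_W = [[L⁻¹Q, L⁻¹],[P L⁻¹ Q - Lᵀ, P L⁻¹]]`. -/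
noncomputable def freeSymplectic {n : ℕ} (P L Q : Matrix (Fin n) (Fin n) ℝ) :
    Matrix (Fin n ⊕ Fin n) (Fin n ⊕ Fin n) ℝ :=
  Matrix.fromBlocks (L⁻¹ * Q) L⁻¹ (P * L⁻¹ * Q - Lᵀ) (P * L⁻¹)

/-- the factorization
`S_W = [[I,0],[P,I]] · [[L⁻¹,0],[0,Lᵀ]] · J · [[I,0],[Q,I]]`. -/
theorem freeSymplectic_factorization {n : ℕ} (P L Q : Matrix (Fin n) (Fin n) ℝ)
    (hP : Pᵀ = P) (hQ : Qᵀ = Q) (hL : L.det ≠ 0) :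
    freeSymplectic P L Q
      = Matrix.fromBlocks 1 0 P 1 * Matrix.fromBlocks L⁻¹ 0 0 Lᵀ * sympJ n *
          Matrix.fromBlocks 1 0 Q 1 := by
  simp [freeSymplectic, sympJ, Matrix.fromBlocks_multiply, Matrix.mul_assoc, sub_eq_add_neg]
  abel
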